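/- For every X ⊆ ℕ with |X| ≥ 3, there exists a constant c_X > 0 depending only on X such that for all n ∈ ℕ, r_X(n) ≥ n · exp(−c_X·√(log n)), where r_X(n) is the maximum size of a subset of {1,…,n} containing no non-trivial affine copy of X. -/

import Mathlib

set_option maxHeartbeats 800000

open Finset


/-- A finset `Y ⊆ ℕ` is a non-trivial copy of `X ⊆ ℕ` if `Y = b + r • X`
for some `b ∈ ℝ` and real `r > 0`. -/
def IsNontrivialCopy1 (X Y : Finset ℕ) : Prop :=
  ∃ (b r : ℝ), 0 < r ∧
    (Y.image fun a : ℕ => (a : ℝ)) = X.image fun x : ℕ => b + r * (x : ℝ)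

/-- `A` is `X`-free if it contains no non-trivial copy of `X`. -/
def XFree1 (X A : Finset ℕ) : Prop :=
  ∀ Y ⊆ A, ¬ IsNontrivialCopy1 X Y

/-- `r_X(n)`: the maximum cardinality of an `X`-free subset of `{1,…,n}`. -/
noncomputable def rXmax1 (X : Finset ℕ) (n : ℕ) : ℕ :=
  sSup {m : ℕ | ∃ A : Finset ℕ, A ⊆ Finset.Icc 1 n ∧ XFree1 X A ∧ A.card = m}

lemma exists_three (X : Finset ℕ) (hX : 3 ≤ X.card) :
    ∃ p ∈ X, ∃ q ∈ X, ∃ s ∈ X, p < q ∧ q < s := by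
  have h1 : X.Nonempty := Finset.card_pos.mp (by omega)
  set p := X.min' h1 with hp
  have hpX : p ∈ X := X.min'_mem h1
  have h2 : (X.erase p).Nonempty := by
    rw [← Finset.card_pos, Finset.card_erase_of_mem hpX]; omega
  set q := (X.erase p).min' h2 with hq
  have hqX' : q ∈ X.erase p := Finset.min'_mem _ h2
  have h3 : ((X.erase p).erase q).Nonempty := by
    rw [← Finset.card_pos, Finset.card_erase_of_mem hqX',
      Finset.card_erase_of_mem hpX]; omega
  set s := ((X.erase p).erase q).min' h3 with hs
  have hsX' : s ∈ (X.erase p).erase q := Finset.min'_mem _ h3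
  refine ⟨p, hpX, q, Finset.mem_of_mem_erase hqX', s,
    Finset.mem_of_mem_erase (Finset.mem_of_mem_erase hsX'), ?_, ?_⟩
  · exact lt_of_le_of_ne (X.min'_le q (Finset.mem_of_mem_erase hqX'))
      (Finset.ne_of_mem_erase hqX').symm
  · exact lt_of_le_of_ne ((X.erase p).min'_le s (Finset.mem_of_mem_erase hsX'))
      (Finset.ne_of_mem_erase hsX').symm

lemma xfree_of_pattern {X A : Finset ℕ} {p q s : ℕ}
    (hp : p ∈ X) (hq : q ∈ X) (hs : s ∈ X) (hpq : p < q) (hqs : q < s)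
    (h : ∀ x ∈ A, ∀ y ∈ A, ∀ z ∈ A,
      (s - q) * x + (q - p) * z = (s - p) * y → x = z) : XFree1 X A := by
  rintro Y hY ⟨b₀, r, hr, himg⟩
  have hmem : ∀ t ∈ X, ∃ x ∈ Y, (x : ℝ) = b₀ + r * t := by
    intro t ht
    have : b₀ + r * (t : ℝ) ∈ X.image fun x : ℕ => b₀ + r * (x : ℝ) :=
      Finset.mem_image_of_mem _ ht
    rw [← himg] at this
    obtain ⟨x, hx, hx'⟩ := Finset.mem_image.mp this
    exact ⟨x, hx, hx'⟩
  obtain ⟨x, hxY, hx⟩ := hmem p hp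
  obtain ⟨y, hyY, hy⟩ := hmem q hq
  obtain ⟨z, hzY, hz⟩ := hmem s hs
  have hxz : x ≠ z := by
    intro hxzeq
    rw [hxzeq, hz] at hx
    have : r * (s : ℝ) = r * p := by linarith
    have hsp : (s : ℝ) = p := by
      exact mul_left_cancel₀ hr.ne' this
    have : s = p := by exact_mod_cast hsp
    omega
  apply hxz
  refine h x (hY hxY) y (hY hyY) z (hY hzY) ?_
  have key : ((s - q : ℕ) : ℝ) * x + ((q - p : ℕ) : ℝ) * z = ((s - p : ℕ) : ℝ) * y := by
    rw [hx, hy, hz]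
    push_cast [Nat.cast_sub hqs.le, Nat.cast_sub hpq.le, Nat.cast_sub (hpq.trans hqs).le]
    ring
  exact_mod_cast key

lemma sphere_weighted {m d k a b : ℕ} (ha : 0 < a) (hb : 0 < b)
    {u v w : Fin m → ℕ}
    (hu : u ∈ Behrend.sphere m d k) (hv : v ∈ Behrend.sphere m d k)
    (hw : w ∈ Behrend.sphere m d k)
    (h : ∀ i, b * u i + a * w i = (a + b) * v i) : u = w := by
  have hu2 : ∑ i, ((u i : ℤ)) ^ 2 = (k : ℤ) := by
    have := (Finset.mem_filter.mp hu).2; exact_mod_cast congrArg (Nat.cast : ℕ → ℤ) this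
  have hv2 : ∑ i, ((v i : ℤ)) ^ 2 = (k : ℤ) := by
    have := (Finset.mem_filter.mp hv).2; exact_mod_cast congrArg (Nat.cast : ℕ → ℤ) this
  have hw2 : ∑ i, ((w i : ℤ)) ^ 2 = (k : ℤ) := by
    have := (Finset.mem_filter.mp hw).2; exact_mod_cast congrArg (Nat.cast : ℕ → ℤ) this
  have e1 : ∀ i : Fin m, ((a : ℤ) * b) * ((u i : ℤ) - (w i : ℤ)) ^ 2 =
      ((a : ℤ) + b) * ((b : ℤ) * (u i : ℤ) ^ 2) + ((a : ℤ) + b) * ((a : ℤ) * (w i : ℤ) ^ 2)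
        - (((a : ℤ) + b) * (v i : ℤ)) ^ 2 := by
    intro i
    have hi : (b : ℤ) * (u i : ℤ) + (a : ℤ) * (w i : ℤ) = ((a : ℤ) + b) * (v i : ℤ) := by
      exact_mod_cast congrArg (Nat.cast : ℕ → ℤ) (h i)
    rw [← hi]; ring
  have hsum : ∑ i, ((a : ℤ) * b) * ((u i : ℤ) - (w i : ℤ)) ^ 2 = 0 := by
    rw [Finset.sum_congr rfl fun i _ => e1 i]
    simp only [Finset.sum_sub_distrib, Finset.sum_add_distrib, ← Finset.mul_sum, mul_pow]
    rw [hu2, hv2, hw2]; ring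
  have hab : (0 : ℤ) < (a : ℤ) * b := by positivity
  funext i
  have hnn : ∀ i ∈ Finset.univ (α := Fin m),
      (0 : ℤ) ≤ ((a : ℤ) * b) * ((u i : ℤ) - (w i : ℤ)) ^ 2 := fun i _ => by positivity
  have := (Finset.sum_eq_zero_iff_of_nonneg hnn).mp hsum i (Finset.mem_univ i)
  have h0 : ((u i : ℤ) - (w i : ℤ)) ^ 2 = 0 := by
    rcases mul_eq_zero.mp this with h' | h'
    · exact absurd h' hab.ne'
    · exact h'
  have : (u i : ℤ) = (w i : ℤ) := by nlinarith [sq_nonneg ((u i : ℤ) - (w i : ℤ))]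
  exact_mod_cast this

lemma map_lt_pow {m B : ℕ} (hB : 1 ≤ B) {u : Fin m → ℕ} (hu : ∀ i, u i < B) :
    Behrend.map B u < B ^ m := by
  induction m with
  | zero => rw [Behrend.map_zero]; positivity
  | succ m ih =>
    rw [Behrend.map_succ']
    have h1 : u 0 < B := hu 0
    have h2 : Behrend.map B (u ∘ Fin.succ) < B ^ m := ih fun i => hu i.succ
    have h3 : Behrend.map B (u ∘ Fin.succ) * B ≤ (B ^ m - 1) * B :=
      Nat.mul_le_mul_right B (by omega)
    have h4 : (B ^ m - 1) * B = B ^ (m + 1) - B := by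
      rw [Nat.sub_mul, one_mul, pow_succ]
    have h5 : Behrend.map B (u ∘ Fin.succ) * B ≤ B ^ (m + 1) - B := h4 ▸ h3
    have h6 : B ≤ B ^ (m + 1) := Nat.le_self_pow (by omega) B
    omega

lemma card_le_rXmax {X A : Finset ℕ} {n : ℕ} (hA : A ⊆ Finset.Icc 1 n) (hf : XFree1 X A) :
    A.card ≤ rXmax1 X n := by
  apply le_csSup
  · refine ⟨n, ?_⟩
    rintro m ⟨A', hA', -, rfl⟩
    calc A'.card ≤ (Finset.Icc 1 n).card := Finset.card_le_card hA'
    _ = n := by rw [Nat.card_Icc]; omega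
  · exact ⟨A, hA, hf, rfl⟩

lemma construction {X : Finset ℕ} {p q s : ℕ}
    (hp : p ∈ X) (hq : q ∈ X) (hs : s ∈ X) (hpq : p < q) (hqs : q < s)
    (m d k n : ℕ) (hd : 1 ≤ d) (hn : ((s - p) * d) ^ m ≤ n) :
    (Behrend.sphere m d k).card ≤ rXmax1 X n := by
  set a := q - p with hadef
  set b := s - q with hbdef
  set K := s - p with hKdef
  have ha : 0 < a := by omega
  have hb : 0 < b := by omega
  have hab : a + b = K := by omega
  have hK : 1 ≤ K := by omega
  set B := K * d with hBdef
  have hB : 1 ≤ B := Nat.one_le_iff_ne_zero.mpr (by positivity)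
  have hdB : d ≤ B := Nat.le_mul_of_pos_left d (by omega)
  set A : Finset ℕ := ((Behrend.sphere m d k).image (Behrend.map B)).image (· + 1) with hAdef
  have hsph_lt : ∀ u : Fin m → ℕ, u ∈ Behrend.sphere m d k → ∀ i, u i < B := by
    intro u hu i
    exact lt_of_lt_of_le (Behrend.mem_box.mp (Behrend.sphere_subset_box hu) i) hdB
  have hcard : A.card = (Behrend.sphere m d k).card := by
    rw [hAdef, Finset.card_image_of_injective _ (add_left_injective 1),
      Finset.card_image_of_injOn]
    exact Behrend.map_injOn.mono fun u hu i => hsph_lt u hu i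
  have hsub : A ⊆ Finset.Icc 1 n := by
    intro y hy
    rw [hAdef] at hy
    obtain ⟨x, hx, rfl⟩ := Finset.mem_image.mp hy
    obtain ⟨u, hu, rfl⟩ := Finset.mem_image.mp hx
    have := map_lt_pow hB (hsph_lt u hu)
    rw [Finset.mem_Icc]
    constructor
    · omega
    · have hBn : B ^ m ≤ n := hn
      omega
  -- extract the structure of elements of A
  have hmem : ∀ x ∈ A, ∃ u ∈ Behrend.sphere m d k, x = Behrend.map B u + 1 := by
    intro x hx
    rw [hAdef] at hx
    obtain ⟨x', hx', rfl⟩ := Finset.mem_image.mp hx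
    obtain ⟨u, hu, rfl⟩ := Finset.mem_image.mp hx'
    exact ⟨u, hu, rfl⟩
  have hfree : XFree1 X A := by
    refine xfree_of_pattern hp hq hs hpq hqs ?_
    intro x hx y hy z hz heq
    obtain ⟨u, hu, rfl⟩ := hmem x hx
    obtain ⟨v, hv, rfl⟩ := hmem y hy
    obtain ⟨w, hw, rfl⟩ := hmem z hz
    have heq2 : b * (Behrend.map B u + 1) + a * (Behrend.map B w + 1)
        = K * (Behrend.map B v + 1) := by rw [hadef, hbdef, hKdef] at *; exact heq
    have heq' : b * Behrend.map B u + a * Behrend.map B w = K * Behrend.map B v := by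
      simp only [mul_add, mul_one] at heq2; omega
    have hmapF : Behrend.map B (fun i => b * u i + a * w i)
        = b * Behrend.map B u + a * Behrend.map B w := by
      simp only [Behrend.map_apply, add_mul, mul_assoc, Finset.sum_add_distrib, Finset.mul_sum]
    have hmapG : Behrend.map B (fun i => K * v i) = K * Behrend.map B v := by
      simp only [Behrend.map_apply, mul_assoc, Finset.mul_sum]
    have hFG : (fun i => b * u i + a * w i) = (fun i => K * v i) := by
      apply Behrend.map_injOn ?_ ?_ (by rw [hmapF, hmapG, heq'])
      · intro i
        have h1 : u i < d := Behrend.mem_box.mp (Behrend.sphere_subset_box hu) i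
        have h2 : w i < d := Behrend.mem_box.mp (Behrend.sphere_subset_box hw) i
        calc b * u i + a * w i < b * d + a * d :=
              Nat.add_lt_add (mul_lt_mul_of_pos_left h1 hb) (mul_lt_mul_of_pos_left h2 ha)
        _ = B := by rw [hBdef, ← hab]; ring
      · intro i
        have h1 : v i < d := Behrend.mem_box.mp (Behrend.sphere_subset_box hv) i
        exact mul_lt_mul_of_pos_left h1 (by omega)
    have huw : u = w := by
      refine sphere_weighted ha hb hu hv hw fun i => ?_
      have := congrFun hFG i
      simpa [hab] using this
    rw [huw]
  calc (Behrend.sphere m d k).card = A.card := hcard.symm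
  _ ≤ rXmax1 X n := card_le_rXmax hsub hfree

lemma two_mul_le_exp {t : ℝ} (ht : 1 ≤ t) : 2 * t ≤ Real.exp t := by
  have h5 : t ≤ Real.exp (t - 1) := by
    have := Real.add_one_le_exp (t - 1); linarith
  have h6 : 2 * t ≤ Real.exp 1 * Real.exp (t - 1) := by
    nlinarith [Real.exp_one_gt_d9, Real.exp_pos (t - 1)]
  rw [← Real.exp_add] at h6
  simpa using h6

theorem stmt8 (X : Finset ℕ) (hX : 3 ≤ X.card) :
    ∃ c : ℝ, 0 < c ∧ ∀ n : ℕ,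
      (rXmax1 X n : ℝ) ≥ (n : ℝ) * Real.exp (-c * Real.sqrt (Real.log n)) := by
  obtain ⟨p, hp, q, hq, s, hs, hpq, hqs⟩ := exists_three X hX
  set K := s - p with hKdef
  have hK2 : 2 ≤ K := by omega
  have hKR : (2 : ℝ) ≤ (K : ℝ) := by exact_mod_cast hK2
  have hlog2K : 0 ≤ Real.log (2 * K) := Real.log_nonneg (by linarith)
  set T : ℝ := max 1 (2 * Real.log (2 * K)) with hT
  have hT1 : 1 ≤ T := le_max_left _ _
  have hT2 : 2 * Real.log (2 * K) ≤ T := le_max_right _ _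
  set c : ℝ := T + 3 + 2 * Real.log (2 * K) with hc
  have hc0 : 0 < c := by rw [hc]; linarith
  have hcT : T ≤ c := by rw [hc]; linarith
  refine ⟨c, hc0, fun n => ?_⟩
  rcases Nat.eq_zero_or_pos n with rfl | hn1
  · simp
  have hn1R : (1 : ℝ) ≤ (n : ℝ) := by exact_mod_cast hn1
  set L := Real.log n with hL
  have hL0 : 0 ≤ L := Real.log_nonneg hn1R
  set t := Real.sqrt L with ht
  have ht0 : 0 ≤ t := Real.sqrt_nonneg L
  have htt : t ^ 2 = L := Real.sq_sqrt hL0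
  have hnexp : (n : ℝ) = Real.exp L := (Real.exp_log (by linarith)).symm
  rw [ge_iff_le]
  rcases le_or_gt t T with hsmall | hlarge
  · -- small case : n * exp (-c t) ≤ 1 ≤ rXmax
    have h1 : (n : ℝ) * Real.exp (-c * t) ≤ 1 := by
      rw [hnexp, ← Real.exp_add, ← Real.exp_zero]
      apply Real.exp_le_exp.mpr
      nlinarith
    have h2 : 1 ≤ rXmax1 X n := by
      have hsub : ({1} : Finset ℕ) ⊆ Finset.Icc 1 n := by
        intro x hx; simp at hx; subst hx; simp [Finset.mem_Icc]; omega
      have hfree : XFree1 X ({1} : Finset ℕ) :=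
        xfree_of_pattern hp hq hs hpq hqs (by
          intro x hx y hy z hz _
          simp at hx hz; omega)
      simpa using card_le_rXmax hsub hfree
    calc (n : ℝ) * Real.exp (-c * t) ≤ 1 := h1
    _ ≤ (rXmax1 X n : ℝ) := by exact_mod_cast h2
  · -- large case
    have ht1 : 1 ≤ t := hT1.trans hlarge.le
    set m := ⌈t⌉₊ with hm
    have hm1 : 1 ≤ m := Nat.one_le_iff_ne_zero.mpr (by
      simp only [hm, ne_eq, Nat.ceil_eq_zero, not_le]; linarith)
    have hmt : t ≤ (m : ℝ) := Nat.le_ceil t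
    have hm2t : (m : ℝ) ≤ 2 * t := by
      have := Nat.ceil_lt_add_one ht0
      rw [← hm] at this; linarith
    have hm0R : (0 : ℝ) < (m : ℝ) := by positivity
    set E := Real.exp (L / m) with hE
    have hEpos : 0 < E := Real.exp_pos _
    have hEm : E ^ m = (n : ℝ) := by
      rw [hE, ← Real.exp_nat_mul, mul_div_cancel₀ _ hm0R.ne', hnexp]
    have hLm_low : t / 2 ≤ L / m := by
      have h1 : L / (2 * t) ≤ L / m :=
        div_le_div_of_nonneg_left hL0 hm0R hm2t
      have h2 : L / (2 * t) = t / 2 := by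
        rw [← htt]; field_simp
      linarith
    have hLm_le : L / m ≤ t := by
      have h1 : L / m ≤ L / t := div_le_div_of_nonneg_left hL0 (by linarith) hmt
      have h2 : L / t = t := by rw [← htt]; field_simp [pow_two]
      linarith
    have hE2K : 2 * (K : ℝ) ≤ E := by
      rw [hE, ← Real.exp_log (show (0:ℝ) < 2 * K by linarith)]
      apply Real.exp_le_exp.mpr
      linarith
    set d := ⌊E / K⌋₊ with hd
    have hKpos : (0 : ℝ) < (K : ℝ) := by linarith
    have hd_up : (d : ℝ) ≤ E / K := Nat.floor_le (by positivity)
    have hd_low : E / (2 * K) ≤ (d : ℝ) := by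
      have h1 : E / K - 1 < (d : ℝ) := Nat.sub_one_lt_floor _
      have h2 : E / (2 * K) ≤ E / K - 1 := by
        rw [div_sub' hKpos.ne', div_le_div_iff₀ (by positivity) hKpos]
        ring_nf
        nlinarith
      linarith
    have hd1 : 1 ≤ d := by
      apply Nat.le_floor
      rw [le_div_iff₀ hKpos]
      push_cast; linarith
    have hdpos : (0 : ℝ) < (d : ℝ) := by exact_mod_cast hd1
    have hKd : ((K * d : ℕ) : ℝ) ≤ E := by
      push_cast
      calc (K : ℝ) * d ≤ K * (E / K) := by
            apply mul_le_mul_of_nonneg_left hd_up hKpos.le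
      _ = E := by field_simp
    have hKdm : ((K * d)) ^ m ≤ n := by
      have hcast : (((K * d) ^ m : ℕ) : ℝ) ≤ (n : ℝ) := by
        push_cast
        calc ((K : ℝ) * d) ^ m ≤ E ^ m := by
              apply pow_le_pow_left₀ (by positivity) (by push_cast at hKd ⊢; linarith)
        _ = (n : ℝ) := hEm
      exact_mod_cast hcast
    obtain ⟨k, hk⟩ := Behrend.exists_large_sphere m d
    have hcons : (Behrend.sphere m d k).card ≤ rXmax1 X n :=
      construction hp hq hs hpq hqs m d k n hd1 hKdm
    -- analytic key
    have hstep1 : (2 * (K : ℝ)) ^ m * (2 * t * E ^ 2) ≤ Real.exp (c * t) := by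
      have e1 : (2 * (K : ℝ)) ^ m = Real.exp ((m : ℝ) * Real.log (2 * K)) := by
        rw [Real.exp_nat_mul, Real.exp_log (by linarith)]
      have e2 : E ^ 2 = Real.exp (2 * (L / m)) := by
        rw [hE, ← Real.exp_nat_mul]; norm_num
      have e3 : 2 * t ≤ Real.exp t := two_mul_le_exp ht1
      calc (2 * (K : ℝ)) ^ m * (2 * t * E ^ 2)
          ≤ Real.exp ((m : ℝ) * Real.log (2 * K)) * (Real.exp t * Real.exp (2 * (L / m))) := by
            rw [e1, e2]
            apply mul_le_mul_of_nonneg_left _ (Real.exp_pos _).le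
            apply mul_le_mul_of_nonneg_right e3 (Real.exp_pos _).le
      _ = Real.exp ((m : ℝ) * Real.log (2 * K) + t + 2 * (L / m)) := by
            rw [← Real.exp_add, ← Real.exp_add]; ring_nf
      _ ≤ Real.exp (c * t) := by
            apply Real.exp_le_exp.mpr
            have hmlog : (m : ℝ) * Real.log (2 * K) ≤ T * t := by
              calc (m : ℝ) * Real.log (2 * K) ≤ 2 * t * Real.log (2 * K) := by
                    apply mul_le_mul_of_nonneg_right hm2t hlog2K
              _ = t * (2 * Real.log (2 * K)) := by ring
              _ ≤ t * T := mul_le_mul_of_nonneg_left hT2 ht0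
              _ = T * t := mul_comm _ _
            have h2Lm : 2 * (L / m) ≤ 2 * t := by linarith
            have hextra : 0 ≤ 2 * Real.log (2 * K) * t := by positivity
            have hct : c * t = T * t + 3 * t + 2 * Real.log (2 * K) * t := by
              rw [hc]; ring
            linarith
    have hD : (0 : ℝ) < (2 * (K : ℝ)) ^ m * (2 * t * E ^ 2) := by positivity
    have hstep2 : (n : ℝ) * Real.exp (-c * t) * ((2 * (K : ℝ)) ^ m * (2 * t * E ^ 2))
        ≤ (n : ℝ) := by
      calc (n : ℝ) * Real.exp (-c * t) * ((2 * (K : ℝ)) ^ m * (2 * t * E ^ 2))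
          ≤ (n : ℝ) * Real.exp (-c * t) * Real.exp (c * t) := by
            apply mul_le_mul_of_nonneg_left hstep1
            positivity
      _ = (n : ℝ) := by rw [mul_assoc, ← Real.exp_add]; simp
    have k1 : (n : ℝ) * Real.exp (-c * t)
        ≤ (n : ℝ) / ((2 * (K : ℝ)) ^ m * (2 * t * E ^ 2)) := by
      rw [le_div_iff₀ hD]; exact hstep2
    have hE_le : E ≤ 2 * (K : ℝ) * (d : ℝ) := by
      have := (div_le_iff₀ (show (0:ℝ) < 2 * K by linarith)).mp hd_low
      linarith
    have k2 : (n : ℝ) / ((2 * (K : ℝ)) ^ m * (2 * t * E ^ 2))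
        ≤ (d : ℝ) ^ m / (2 * t * E ^ 2) := by
      have hn_le : (n : ℝ) ≤ (2 * (K : ℝ)) ^ m * (d : ℝ) ^ m := by
        calc (n : ℝ) = E ^ m := hEm.symm
        _ ≤ (2 * (K : ℝ) * (d : ℝ)) ^ m := pow_le_pow_left₀ hEpos.le hE_le m
        _ = (2 * (K : ℝ)) ^ m * (d : ℝ) ^ m := mul_pow _ _ _
      calc (n : ℝ) / ((2 * (K : ℝ)) ^ m * (2 * t * E ^ 2))
          ≤ ((2 * (K : ℝ)) ^ m * (d : ℝ) ^ m) / ((2 * (K : ℝ)) ^ m * (2 * t * E ^ 2)) := by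
            gcongr
      _ = (d : ℝ) ^ m / (2 * t * E ^ 2) := by
            rw [mul_div_mul_left _ _ (by positivity : ((2 * (K : ℝ)) ^ m) ≠ 0)]
    have hd_le_E : (d : ℝ) ≤ E := by
      calc (d : ℝ) ≤ E / K := hd_up
      _ ≤ E := by
        apply div_le_self hEpos.le
        linarith
    have k3 : (d : ℝ) ^ m / (2 * t * E ^ 2) ≤ (d : ℝ) ^ m / ((m : ℝ) * (d : ℝ) ^ 2) := by
      apply div_le_div_of_nonneg_left (by positivity) (by positivity)
      have hd2 : (d : ℝ) ^ 2 ≤ E ^ 2 := pow_le_pow_left₀ hdpos.le hd_le_E 2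
      calc (m : ℝ) * (d : ℝ) ^ 2 ≤ 2 * t * (d : ℝ) ^ 2 :=
            mul_le_mul_of_nonneg_right hm2t (by positivity)
      _ ≤ 2 * t * E ^ 2 := mul_le_mul_of_nonneg_left hd2 (by linarith)
    have hk' : (d : ℝ) ^ m / ((m : ℝ) * (d : ℝ) ^ 2) ≤ ((Behrend.sphere m d k).card : ℝ) := by
      have := hk
      push_cast at this
      exact this
    calc (n : ℝ) * Real.exp (-c * t) ≤ (d : ℝ) ^ m / (2 * t * E ^ 2) := k1.trans k2
    _ ≤ (d : ℝ) ^ m / ((m : ℝ) * (d : ℝ) ^ 2) := k3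
    _ ≤ ((Behrend.sphere m d k).card : ℝ) := hk'
    _ ≤ (rXmax1 X n : ℝ) := by exact_mod_cast hcons
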